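/- For a positive integer m, write it uniquely as m = (n+1)^p · q with q not divisible by n+1. Then the folding/unfolding process for δ^(m) terminates in exactly p steps of the imaginary relation followed by one step of the real relation, and the multiset of lengths appearing in the unfolded expression of δ^(m) is {q (with multiplicity n+1)} ∪ {(n+1)^i q (with multiplicity n) : 0 ≤ i ≤ p−1}, all of whose members are strictly less than m when p ≥ 1 or equal in total weight mδ. -/

import Mathlib

/-- Generators for Kostant partition expressions in type A_n^(1):
`imag j m` is the part (m δ_j); `real c i ℓ` is the part (c δ + α_i^(ℓ));
`dsym m` is the formal symbol δ^(m). -/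
inductive Gen (n : ℕ) : Type
  | imag : Fin n → ℕ → Gen n
  | real : ℕ → Fin (n+1) → ℕ → Gen n
  | dsym : ℕ → Gen n
  deriving DecidableEq

/-- Full unfolding of the symbol δ^(m) under the defining relations. -/
def unfoldDelta (n : ℕ) : ℕ → Multiset (Gen n)
  | 0 => 0
  | (m+1) =>
    if h0 : n = 0 then 0
    else if (m+1) % (n+1) = 0 then
      unfoldDelta n ((m+1)/(n+1)) +
        Multiset.map (fun j : Fin n => Gen.imag j ((m+1)/(n+1))) Finset.univ.val
    else
      Multiset.map (fun j : Fin (n+1) => Gen.real ((m+1)/(n+1)) j ((m+1) % (n+1)))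
        Finset.univ.val
  decreasing_by exact Nat.div_lt_self (Nat.succ_pos m) (by omega)

/-- The size recorded for each part in the unfolding of δ^(m): a real part
(cδ + α_i^(ℓ)) has length (n+1)c + ℓ, and for an imaginary part (kδ_j) we record the
δ-multiple k. -/
def partSize (n : ℕ) : Gen n → ℕ
  | Gen.imag _ k => k
  | Gen.real c _ ℓ => (n+1) * c + ℓ
  | Gen.dsym m => m

open Fin.NatCast in
/-- The weight of a part, as a coefficient vector on the simple roots α_0,...,α_n:
(kδ_j) and δ^(k) have weight kδ, and (cδ + α_i^(ℓ)) has weight cδ + α_i^(ℓ). -/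
def genWt (n : ℕ) : Gen n → (Fin (n+1) → ℤ)
  | Gen.imag _ k => fun _ => (k : ℤ)
  | Gen.dsym k => fun _ => (k : ℤ)
  | Gen.real c i ℓ =>
      (fun _ => (c : ℤ)) + ∑ t ∈ Finset.range ℓ, Pi.single (i - (t : Fin (n+1))) (1 : ℤ)

lemma unfold_real (n m : ℕ) (h0 : n ≠ 0) (hm : 0 < m) (h : m % (n+1) ≠ 0) :
    unfoldDelta n m = Multiset.map (fun j : Fin (n+1) => Gen.real (m/(n+1)) j (m % (n+1)))
      Finset.univ.val := by
  obtain ⟨m', rfl⟩ := Nat.exists_eq_succ_of_ne_zero hm.ne'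
  rw [unfoldDelta]
  simp [h0, h]

lemma unfold_imag (n m : ℕ) (h0 : n ≠ 0) (hm : 0 < m) (h : m % (n+1) = 0) :
    unfoldDelta n m = unfoldDelta n (m/(n+1)) +
      Multiset.map (fun j : Fin n => Gen.imag j (m/(n+1))) Finset.univ.val := by
  obtain ⟨m', rfl⟩ := Nat.exists_eq_succ_of_ne_zero hm.ne'
  rw [unfoldDelta]
  simp [h0, h]

lemma sum_single (n : ℕ) (t : Fin (n+1)) :
    ∑ i : Fin (n+1), Pi.single (i - t) (1:ℤ) = fun _ => (1:ℤ) := by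
  funext x
  simp [Finset.sum_apply, Pi.single_apply, eq_sub_iff_add_eq]

lemma wt_real_sum (n c ℓ : ℕ) :
    ∑ i : Fin (n+1), genWt n (Gen.real c i ℓ)
      = fun _ => ((n+1) * c + ℓ : ℤ) := by
  funext x
  simp only [genWt, Finset.sum_add_distrib]
  rw [Finset.sum_comm]
  simp only [sum_single]
  simp [Finset.sum_apply, mul_comm]

/-- Write a positive integer m uniquely as m = (n+1)^p · q with (n+1) ∤ q. The
unfolding of δ^(m) terminates (p steps of the imaginary relation followed by one step
of the real relation), and the multiset of sizes of the parts of the unfolded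
expression is {q with multiplicity n+1} ∪ {(n+1)^i q with multiplicity n : 0 ≤ i ≤ p-1};
all of its members are strictly less than m when p ≥ 1, and the total weight of the
unfolded expression is mδ. -/
theorem unfoldDelta_sizes (n p q : ℕ) (hn : 1 ≤ n) (hq : 0 < q) (hnd : ¬ (n+1) ∣ q) :
    ((unfoldDelta n ((n+1)^p * q)).map (partSize n)
        = Multiset.replicate (n+1) q
          + ∑ i ∈ Finset.range p, Multiset.replicate n ((n+1)^i * q)) ∧
    (1 ≤ p → ∀ L ∈ (unfoldDelta n ((n+1)^p * q)).map (partSize n), L < (n+1)^p * q) ∧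
    ((unfoldDelta n ((n+1)^p * q)).map (genWt n)).sum
        = (((n+1)^p * q : ℕ) : ℤ) • (fun _ => 1 : Fin (n+1) → ℤ) := by
  have h0 : n ≠ 0 := by omega
  induction p with
  | zero =>
    simp only [pow_zero, one_mul, Finset.range_zero, Finset.sum_empty, add_zero]
    have hq' : q % (n+1) ≠ 0 := fun h => hnd (Nat.dvd_of_mod_eq_zero h)
    rw [unfold_real n q h0 hq hq']
    have hsz : (n+1) * (q/(n+1)) + q % (n+1) = q := Nat.div_add_mod q (n+1)
    refine ⟨?_, by omega, ?_⟩
    · rw [Multiset.map_map]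
      have : ((partSize n) ∘ fun j : Fin (n+1) => Gen.real (q/(n+1)) j (q % (n+1)))
          = fun _ => q := by
        funext j; simp [partSize, hsz]
      rw [this, Multiset.map_const']
      simp
    · rw [Multiset.map_map]
      have : ((Multiset.map ((genWt n) ∘ fun j : Fin (n+1) =>
          Gen.real (q/(n+1)) j (q % (n+1))) Finset.univ.val)).sum
          = ∑ i : Fin (n+1), genWt n (Gen.real (q/(n+1)) i (q % (n+1))) := rfl
      rw [this, wt_real_sum]
      funext x
      simp only [Pi.smul_apply, smul_eq_mul, mul_one]
      exact_mod_cast hsz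
  | succ p ih =>
    obtain ⟨IH1, _, IH3⟩ := ih
    set m' := (n+1)^p * q with hm'
    have hm'pos : 0 < m' := by positivity
    have hmdef : (n+1)^(p+1) * q = (n+1) * m' := by rw [hm', pow_succ]; ring
    have hmpos : 0 < (n+1)^(p+1) * q := by positivity
    have hmod : ((n+1)^(p+1) * q) % (n+1) = 0 := by
      rw [hmdef]; simp [Nat.mul_mod_right]
    have hdiv : ((n+1)^(p+1) * q) / (n+1) = m' := by
      rw [hmdef]; exact Nat.mul_div_cancel_left m' (by omega)
    rw [unfold_imag n _ h0 hmpos hmod, hdiv]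
    have hlt : m' < (n+1)^(p+1) * q := by
      rw [hmdef]
      have : 1 * m' < (n+1) * m' := (Nat.mul_lt_mul_right hm'pos).mpr (by omega)
      omega
    have himag : Multiset.map (partSize n)
        (Multiset.map (fun j : Fin n => Gen.imag j m') Finset.univ.val)
        = Multiset.replicate n m' := by
      rw [Multiset.map_map]
      have : ((partSize n) ∘ fun j : Fin n => Gen.imag j m') = fun _ => m' := by
        funext j; simp [partSize]
      rw [this, Multiset.map_const']
      simp
    constructor
    · rw [Multiset.map_add, IH1, himag, Finset.sum_range_succ, ← hm', add_assoc]
    constructor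
    · intro _ L hL
      rw [Multiset.map_add, IH1, himag] at hL
      simp only [Multiset.mem_add, Multiset.mem_replicate, Multiset.mem_sum,
        Finset.mem_range] at hL
      rcases hL with (⟨_, rfl⟩ | ⟨i, hi, _, rfl⟩) | ⟨_, rfl⟩
      · have h1 : 1 < (n+1)^(p+1) := Nat.one_lt_pow (by omega) (by omega)
        have := (Nat.mul_lt_mul_right hq).mpr h1
        omega
      · exact (Nat.mul_lt_mul_right hq).mpr (Nat.pow_lt_pow_right (by omega) (by omega))
      · exact hlt
    · rw [Multiset.map_add, Multiset.sum_add, IH3]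
      have : (Multiset.map (genWt n)
          (Multiset.map (fun j : Fin n => Gen.imag j m') Finset.univ.val)).sum
          = fun _ => (n * m' : ℤ) := by
        rw [Multiset.map_map]
        have : ((genWt n) ∘ fun j : Fin n => Gen.imag j m') = fun _ => (fun _ => (m':ℤ)) := by
          funext j; simp [genWt]
        rw [this, Multiset.map_const']
        simp only [Multiset.sum_replicate]
        funext x
        simp [mul_comm]
      rw [this]
      funext x
      simp only [Pi.add_apply, Pi.smul_apply, smul_eq_mul, mul_one]
      rw [hmdef]
      push_cast
      ring
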